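/- Let G be a locally finite tree and consider a transient rotor walk started at a with (possibly empty) sink Z and final rotor configuration ξ. Let ⟨x_0 = a, x_1, x_2, …⟩ be the maximal forward path from a in ξ. If x_i is incomplete in ξ (some neighbor of x_i in G is not in the ξ-tree containing x_i), then the first visit to x_{i+1} occurred exactly one step after the last visit to x_i: FV(x_{i+1}) = LV(x_i) + 1. -/

import Mathlib

open MeasureTheory Filter ENNReal Set

namespace RotorWalk

variable {V : Type*} [DecidableEq V]

/-- One step of the rotor walk with local mechanisms `τ`:
the rotor at the current position is advanced and the walker follows it. -/
def step (τ : V → V → V) (p : V × (V → V)) : V × (V → V) :=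
  (τ p.1 (p.2 p.1), Function.update p.2 p.1 (τ p.1 (p.2 p.1)))

/-- Trajectory (position, rotor configuration) of the rotor walk started at `a`
with initial rotor configuration `ρ`. -/
def traj (τ : V → V → V) (a : V) (ρ : V → V) : ℕ → V × (V → V)
  | 0 => (a, ρ)
  | t + 1 => step τ (traj τ a ρ t)

/-- Position of the walker at time `t`. -/
def pos (τ : V → V → V) (a : V) (ρ : V → V) (t : ℕ) : V := (traj τ a ρ t).1

/-- Rotor configuration at time `t`. -/
def conf (τ : V → V → V) (a : V) (ρ : V → V) (t : ℕ) : V → V := (traj τ a ρ t).2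

/-- The walk has not hit the sink `Z` up to and including time `t`. -/
def aliveAt (τ : V → V → V) (Z : Set V) (a : V) (ρ : V → V) (t : ℕ) : Prop :=
  ∀ s ≤ t, pos τ a ρ s ∉ Z

/-- Odometer: the number of visits to `x` strictly before hitting the sink `Z`. -/
noncomputable def odometer (τ : V → V → V) (Z : Set V) (a : V) (ρ : V → V) (x : V) : ℕ∞ :=
  {t : ℕ | aliveAt τ Z a ρ t ∧ pos τ a ρ t = x}.encard

/-- Number of traversals of the directed edge `(y, x)` strictly before hitting `Z`. -/
noncomputable def edgeCount (τ : V → V → V) (Z : Set V) (a : V) (ρ : V → V) (y x : V) : ℕ∞ :=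
  {t : ℕ | aliveAt τ Z a ρ t ∧ pos τ a ρ t = y ∧ pos τ a ρ (t + 1) = x}.encard

open Classical in
/-- The final rotor configuration: the configuration at the hitting time of `Z` if the walk
hits `Z`, and otherwise the pointwise eventual value of the rotor configuration
(which exists when the walk is transient). -/
noncomputable def finalConf (τ : V → V → V) (Z : Set V) (a : V) (ρ : V → V) : V → V :=
  if ∃ t, pos τ a ρ t ∈ Z then conf τ a ρ (sInf {t | pos τ a ρ t ∈ Z})
  else fun x => if h : ∃ v, ∀ᶠ t in atTop, conf τ a ρ t x = v then h.choose else ρ x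

/-- Total number of visits to `x` by `n` sequential rotor walks (rotors not reset). -/
noncomputable def Svis (τ : V → V → V) (Z : Set V) (a : V) (ρ : V → V) (n : ℕ) (x : V) : ℕ∞ :=
  ∑ i ∈ Finset.range n, odometer τ Z a ((finalConf τ Z a)^[i] ρ) x

/-- Total number of traversals of the directed edge `(y,x)` by `n` sequential rotor walks. -/
noncomputable def Sedge (τ : V → V → V) (Z : Set V) (a : V) (ρ : V → V) (n : ℕ) (y x : V) : ℕ∞ :=
  ∑ i ∈ Finset.range n, edgeCount τ Z a ((finalConf τ Z a)^[i] ρ) y x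

/-- The rotor walk is transient: every vertex is visited finitely often (before hitting `Z`). -/
def IsTransientWalk (τ : V → V → V) (Z : Set V) (a : V) (ρ : V → V) : Prop :=
  ∀ x : V, {t : ℕ | aliveAt τ Z a ρ t ∧ pos τ a ρ t = x}.Finite

open Classical in
/-- Total number of visits to `x` by `n` sequential rotor walks with empty sink,
set to `⊤` if one of the `n` walks fails to be transient. -/
noncomputable def SvisT (τ : V → V → V) (a : V) (ρ : V → V) (n : ℕ) (x : V) : ℕ∞ :=
  if ∀ i < n, IsTransientWalk τ ∅ a ((finalConf τ ∅ a)^[i] ρ) then Svis τ ∅ a ρ n x else ⊤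

/-- The local mechanisms map neighbors to neighbors and have a single orbit on each
neighborhood (off the sink). -/
def ValidMechanism (G : SimpleGraph V) (Z : Set V) (τ : V → V → V) : Prop :=
  ∀ x ∉ Z, (∀ y, G.Adj x y → G.Adj x (τ x y)) ∧
    ∀ y, G.Adj x y → ∀ z, G.Adj x z → ∃ i : ℕ, (τ x)^[i] y = z

/-- A rotor configuration: every rotor (off the sink) points to a neighbor. -/
def ValidConfig (G : SimpleGraph V) (Z : Set V) (ρ : V → V) : Prop :=
  ∀ x ∉ Z, G.Adj x (ρ x)

/-- Time-`t` distribution of the simple random walk started at `a` and killed on `Z`. -/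
noncomputable def srw (G : SimpleGraph V) [G.LocallyFinite] (Z : Set V) (a : V) :
    ℕ → V → ℝ≥0∞
  | 0 => Set.indicator {a} 1
  | t + 1 => fun x =>
      ∑' y : V, Set.indicator {y | G.Adj y x ∧ y ∉ Z}
        (fun y => srw G Z a t y / (G.degree y : ℝ≥0∞)) y

/-- Green function: the expected number of visits to a vertex, strictly before hitting `Z`,
of the simple random walk started at `a`. -/
noncomputable def green (G : SimpleGraph V) [G.LocallyFinite] (Z : Set V) (a : V) : V → ℝ≥0∞ :=
  Set.indicator Zᶜ (fun x => ∑' t : ℕ, srw G Z a t x)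

/-- The graph is transient: the Green function (with empty sink) is finite. -/
def TransientGraph (G : SimpleGraph V) [G.LocallyFinite] : Prop :=
  ∀ a x : V, green G ∅ a x < ⊤

/-- A `Z`-oriented spanning forest, encoded as a rotor configuration: off `Z` it points to a
neighbor, on `Z` it is normalized to the identity, and every vertex eventually reaches `Z`. -/
def IsOSF (G : SimpleGraph V) (Z : Set V) (ρ : V → V) : Prop :=
  (∀ x ∉ Z, G.Adj x (ρ x)) ∧ (∀ x ∈ Z, ρ x = x) ∧ ∀ x : V, ∃ n : ℕ, ρ^[n] x ∈ Z

/-- An oriented spanning forest of an infinite graph: every vertex has out-degree one along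
an edge and there is no directed cycle. -/
def IsOSFInf (G : SimpleGraph V) (ρ : V → V) : Prop :=
  (∀ x, G.Adj x (ρ x)) ∧ ∀ x : V, ∀ n > 0, ρ^[n] x ≠ x

/-- A spanning forest of the ball of radius `R` around `a`, oriented toward the boundary
sphere (the sink), normalized to the identity outside the open ball. -/
def IsOSFBall (G : SimpleGraph V) (a : V) (R : ℕ) (ρ : V → V) : Prop :=
  (∀ x, G.dist a x < R → G.Adj x (ρ x)) ∧
  (∀ x, ¬ G.dist a x < R → ρ x = x) ∧
  ∀ x, G.dist a x < R → ∃ n : ℕ, G.dist a (ρ^[n] x) = R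

instance : MeasurableSpace (V → V) := ⊤

/-- `μ` is the oriented wired uniform spanning forest measure of `G` (with respect to the
exhaustion by balls around `a`): it is a probability measure supported on oriented spanning
forests whose finite-dimensional marginals are the limits of the uniform measures on
boundary-oriented spanning forests of the balls. -/
def IsOWUSF (G : SimpleGraph V) (a : V) (μ : Measure (V → V)) : Prop :=
  IsProbabilityMeasure μ ∧
  (∀ᵐ ρ ∂μ, IsOSFInf G ρ) ∧
  ∀ B : Finset (V × V),
    Tendsto (fun R : ℕ =>
        (({ρ : V → V | IsOSFBall G a R ρ ∧ ∀ e ∈ B, ρ e.1 = e.2}.ncard : ℝ) /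
          ({ρ : V → V | IsOSFBall G a R ρ}.ncard : ℝ))) atTop
      (nhds ((μ {ρ : V → V | ∀ e ∈ B, ρ e.1 = e.2}).toReal))

/-- Vertex-transitivity. -/
def VertexTransitive (G : SimpleGraph V) : Prop :=
  ∀ u v : V, ∃ φ : G ≃g G, φ u = v

/-- `μ` is stationary for the rotor walk (empty sink) started at `a`: almost every walk is
transient and the final rotor configuration again has law `μ`. -/
def RWStationary (τ : V → V → V) (a : V) (μ : Measure (V → V)) : Prop :=
  (∀ᵐ ρ ∂μ, IsTransientWalk τ ∅ a ρ) ∧ μ.map (finalConf τ ∅ a) = μ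

/-- `u` and `v` lie in the same (weak) component of the oriented subgraph given by `ξ`. -/
def sameTree (ξ : V → V) (u v : V) : Prop :=
  Relation.ReflTransGen (fun p q => ξ p = q ∨ ξ q = p) u v

/-- `x` is incomplete in `ξ`: some `G`-neighbor of `x` is not in the `ξ`-component of `x`. -/
def Incomplete (G : SimpleGraph V) (ξ : V → V) (x : V) : Prop :=
  ∃ y, G.Adj x y ∧ ¬ sameTree ξ x y

/-- First visit time of `x` by the rotor walk terminated upon hitting `Z`. -/
noncomputable def firstVisit (τ : V → V → V) (Z : Set V) (a : V) (ρ : V → V) (x : V) : ℕ :=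
  sInf {t | (∀ s < t, pos τ a ρ s ∉ Z) ∧ pos τ a ρ t = x}

/-- Last visit time of `x` by the rotor walk terminated upon hitting `Z`. -/
noncomputable def lastVisit (τ : V → V → V) (Z : Set V) (a : V) (ρ : V → V) (x : V) : ℕ :=
  sSup {t | (∀ s < t, pos τ a ρ s ∉ Z) ∧ pos τ a ρ t = x}

/-! ### Auxiliary lemmas -/

section Aux

variable {τ : V → V → V} {Z : Set V} {a : V} {ρ : V → V}

/-- The set of visit times to `x` before hitting the sink. -/
def vis (τ : V → V → V) (Z : Set V) (a : V) (ρ : V → V) (x : V) : Set ℕ :=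
  {t | (∀ s < t, pos τ a ρ s ∉ Z) ∧ pos τ a ρ t = x}

lemma firstVisit_def (x : V) : firstVisit τ Z a ρ x = sInf (vis τ Z a ρ x) := rfl

lemma lastVisit_def (x : V) : lastVisit τ Z a ρ x = sSup (vis τ Z a ρ x) := rfl

lemma pos_zero : pos τ a ρ 0 = a := rfl

lemma pos_succ (t : ℕ) :
    pos τ a ρ (t + 1) = τ (pos τ a ρ t) (conf τ a ρ t (pos τ a ρ t)) := rfl

lemma conf_succ (t : ℕ) :
    conf τ a ρ (t + 1) =
      Function.update (conf τ a ρ t) (pos τ a ρ t) (pos τ a ρ (t + 1)) := rfl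

lemma conf_succ_self (t : ℕ) :
    conf τ a ρ (t + 1) (pos τ a ρ t) = pos τ a ρ (t + 1) := by
  rw [conf_succ]; exact Function.update_self _ _ _

lemma conf_succ_ne {x : V} {t : ℕ} (h : x ≠ pos τ a ρ t) :
    conf τ a ρ (t + 1) x = conf τ a ρ t x := by
  rw [conf_succ]; exact Function.update_of_ne h _ _

lemma conf_eq_of_no_visit {x : V} {t₁ t₂ : ℕ} (h : t₁ ≤ t₂)
    (hnv : ∀ s, t₁ ≤ s → s < t₂ → pos τ a ρ s ≠ x) :
    conf τ a ρ t₂ x = conf τ a ρ t₁ x := by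
  obtain ⟨n, rfl⟩ := Nat.exists_eq_add_of_le h
  clear h
  induction n with
  | zero => rfl
  | succ n ih =>
    rw [← Nat.add_assoc]
    rw [conf_succ_ne (fun hx => hnv _ (Nat.le_add_right _ _)
      (by omega) hx.symm)]
    exact ih (fun s hs hs' => hnv s hs (by omega))

/-- Number of visits to `x` strictly before time `t` (dead or alive). -/
def nvis (τ : V → V → V) (a : V) (ρ : V → V) (x : V) (t : ℕ) : ℕ :=
  ((Finset.range t).filter (fun s => pos τ a ρ s = x)).card

lemma nvis_succ (x : V) (t : ℕ) :
    nvis τ a ρ x (t + 1) =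
      if pos τ a ρ t = x then nvis τ a ρ x t + 1 else nvis τ a ρ x t := by
  unfold nvis
  rw [Finset.range_add_one, Finset.filter_insert]
  split_ifs with h
  · exact Finset.card_insert_of_notMem (by simp)
  · rfl

lemma nvis_mono (x : V) {t t' : ℕ} (h : t ≤ t') :
    nvis τ a ρ x t ≤ nvis τ a ρ x t' :=
  Finset.card_le_card (Finset.filter_subset_filter _
    (Finset.range_subset_range.2 h))

lemma conf_eq_iterate (x : V) (t : ℕ) :
    conf τ a ρ t x = (τ x)^[nvis τ a ρ x t] (ρ x) := by
  induction t with
  | zero => rfl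
  | succ t ih =>
    rw [nvis_succ]
    by_cases h : pos τ a ρ t = x
    · rw [if_pos h, ← h, conf_succ_self, pos_succ, h, ih,
        Function.iterate_succ_apply']
    · rw [if_neg h, conf_succ_ne (fun hx => h hx.symm), ih]

lemma exit_eq {x : V} {t : ℕ} (h : pos τ a ρ t = x) :
    pos τ a ρ (t + 1) = (τ x)^[nvis τ a ρ x t + 1] (ρ x) := by
  rw [pos_succ, h, conf_eq_iterate, Function.iterate_succ_apply']

lemma nvis_exit_lt {x : V} {s t : ℕ} (hs : pos τ a ρ s = x) (hst : s < t) :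
    nvis τ a ρ x s + 1 ≤ nvis τ a ρ x t := by
  have h1 : nvis τ a ρ x (s + 1) = nvis τ a ρ x s + 1 := by
    rw [nvis_succ, if_pos hs]
  rw [← h1]; exact nvis_mono _ hst

lemma exists_exit {x : V} {t j : ℕ} (hj : j < nvis τ a ρ x t) :
    ∃ s < t, pos τ a ρ s = x ∧ nvis τ a ρ x s = j := by
  induction t with
  | zero => simp [nvis] at hj
  | succ t ih =>
    rw [nvis_succ] at hj
    by_cases h : pos τ a ρ t = x
    · rw [if_pos h] at hj
      rcases Nat.lt_succ_iff_lt_or_eq.1 hj with hj' | hj'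
      · obtain ⟨s, hs, h1, h2⟩ := ih hj'
        exact ⟨s, hs.trans (Nat.lt_succ_self _), h1, h2⟩
      · exact ⟨t, Nat.lt_succ_self _, h, hj'.symm⟩
    · rw [if_neg h] at hj
      obtain ⟨s, hs, h1, h2⟩ := ih hj
      exact ⟨s, hs.trans (Nat.lt_succ_self _), h1, h2⟩

lemma mem_vis_of {v x : V} {s t : ℕ} (ht : t ∈ vis τ Z a ρ v) (hs : s < t)
    (hp : pos τ a ρ s = x) : s ∈ vis τ Z a ρ x :=
  ⟨fun u hu => ht.1 u (hu.trans hs), hp⟩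

lemma vis_finite (hwalk : IsTransientWalk τ Z a ρ) {x : V} (hx : x ∉ Z) :
    (vis τ Z a ρ x).Finite := by
  have : vis τ Z a ρ x = {t : ℕ | aliveAt τ Z a ρ t ∧ pos τ a ρ t = x} := by
    ext t
    constructor
    · rintro ⟨h1, h2⟩
      refine ⟨fun s hs => ?_, h2⟩
      rcases Nat.lt_or_ge s t with h | h
      · exact h1 s h
      · have : s = t := le_antisymm hs h
        rw [this, h2]; exact hx
    · rintro ⟨h1, h2⟩
      exact ⟨fun s hs => h1 s hs.le, h2⟩
  rw [this]; exact hwalk x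

lemma conf_valid {G : SimpleGraph V} (hτ : ValidMechanism G Z τ)
    (hρ : ValidConfig G Z ρ) (t : ℕ) : ValidConfig G Z (conf τ a ρ t) := by
  induction t with
  | zero => exact hρ
  | succ t ih =>
    intro x hx
    by_cases h : x = pos τ a ρ t
    · subst h
      rw [conf_succ_self, pos_succ]
      exact (hτ _ hx).1 _ (ih _ hx)
    · rw [conf_succ_ne h]; exact ih _ hx

lemma pos_adj {G : SimpleGraph V} (hτ : ValidMechanism G Z τ)
    (hρ : ValidConfig G Z ρ) {t : ℕ} (h : pos τ a ρ t ∉ Z) :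
    G.Adj (pos τ a ρ t) (pos τ a ρ (t + 1)) := by
  rw [pos_succ]
  exact (hτ _ h).1 _ (conf_valid hτ hρ t _ h)

/-- The final rotor at a visited vertex points along the last exit. -/
lemma finalConf_eq_pos (hwalk : IsTransientWalk τ Z a ρ) {x : V} (hx : x ∉ Z)
    (hne : (vis τ Z a ρ x).Nonempty) :
    finalConf τ Z a ρ x = pos τ a ρ (sSup (vis τ Z a ρ x) + 1) := by
  classical
  set L := sSup (vis τ Z a ρ x) with hL
  have hbdd : BddAbove (vis τ Z a ρ x) := (vis_finite hwalk hx).bddAbove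
  have hLmem : L ∈ vis τ Z a ρ x := Nat.sSup_mem hne hbdd
  have hLle : ∀ t ∈ vis τ Z a ρ x, t ≤ L := fun t ht => le_csSup hbdd ht
  have hconfL : conf τ a ρ (L + 1) x = pos τ a ρ (L + 1) := by
    conv_lhs => rw [← hLmem.2]
    exact conf_succ_self _
  by_cases hhit : ∃ t, pos τ a ρ t ∈ Z
  · have hfc : finalConf τ Z a ρ =
        conf τ a ρ (sInf {t | pos τ a ρ t ∈ Z}) := by
      unfold finalConf; exact if_pos hhit
    set T := sInf {t | pos τ a ρ t ∈ Z} with hT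
    have hTmem : pos τ a ρ T ∈ Z := Nat.sInf_mem hhit
    have hTmin : ∀ s < T, pos τ a ρ s ∉ Z := fun s hs =>
      Nat.notMem_of_lt_sInf hs
    have hLT : L < T := by
      rcases Nat.lt_or_ge L T with h | h
      · exact h
      · exfalso
        rcases Nat.eq_or_lt_of_le h with h' | h'
        · rw [h', hLmem.2] at hTmem; exact hx hTmem
        · exact hLmem.1 T h' hTmem
    rw [hfc]
    rw [conf_eq_of_no_visit (Nat.succ_le_of_lt hLT) ?_, hconfL]
    intro s hs1 hs2 hps
    have hsvis : s ∈ vis τ Z a ρ x :=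
      ⟨fun u hu => hTmin u (hu.trans hs2), hps⟩
    exact absurd (hLle s hsvis) (by omega)
  · push_neg at hhit
    have hfc : finalConf τ Z a ρ = fun y => if h : ∃ v, ∀ᶠ t in atTop,
        conf τ a ρ t y = v then h.choose else ρ y := by
      unfold finalConf; exact if_neg (by push_neg; exact hhit)
    have hev : ∀ᶠ t in atTop, conf τ a ρ t x = pos τ a ρ (L + 1) := by
      rw [eventually_atTop]
      refine ⟨L + 1, fun t ht => ?_⟩
      rw [conf_eq_of_no_visit ht ?_, hconfL]
      intro s hs1 hs2 hps
      have hsvis : s ∈ vis τ Z a ρ x := ⟨fun u _ => hhit u, hps⟩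
      exact absurd (hLle s hsvis) (by omega)
    have hex : ∃ v, ∀ᶠ t in atTop, conf τ a ρ t x = v := ⟨_, hev⟩
    rw [hfc]
    simp only [dif_pos hex]
    obtain ⟨t, h1, h2⟩ := (hex.choose_spec.and hev).exists
    rw [← h1, h2]

lemma finalConf_valid {G : SimpleGraph V} (hτ : ValidMechanism G Z τ)
    (hρ : ValidConfig G Z ρ) : ValidConfig G Z (finalConf τ Z a ρ) := by
  classical
  intro x hx
  by_cases hhit : ∃ t, pos τ a ρ t ∈ Z
  · have hfc : finalConf τ Z a ρ =
        conf τ a ρ (sInf {t | pos τ a ρ t ∈ Z}) := by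
      unfold finalConf; exact if_pos hhit
    rw [hfc]; exact conf_valid hτ hρ _ _ hx
  · have hfc : finalConf τ Z a ρ = fun y => if h : ∃ v, ∀ᶠ t in atTop,
        conf τ a ρ t y = v then h.choose else ρ y := by
      unfold finalConf; exact if_neg hhit
    rw [hfc]
    by_cases hex : ∃ v, ∀ᶠ t in atTop, conf τ a ρ t x = v
    · simp only [dif_pos hex]
      obtain ⟨t, h1⟩ := hex.choose_spec.exists
      rw [← h1]; exact conf_valid hτ hρ t _ hx
    · simp only [dif_neg hex]; exact hρ _ hx

/-- Discrete crossing lemma. -/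
lemma exists_cross (P : ℕ → Prop) {t0 t1 : ℕ} (h : t0 ≤ t1) (h0 : P t0)
    (h1 : ¬ P t1) : ∃ s, t0 ≤ s ∧ s < t1 ∧ P s ∧ ¬ P (s + 1) := by
  classical
  obtain ⟨n, rfl⟩ := Nat.exists_eq_add_of_le h
  clear h
  induction n with
  | zero => exact absurd h0 h1
  | succ n ih =>
    by_cases hp : P (t0 + n)
    · exact ⟨t0 + n, Nat.le_add_right _ _, by omega, hp, by rwa [← Nat.add_assoc] at h1⟩
    · obtain ⟨s, hs1, hs2, hs3, hs4⟩ := ih hp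
      exact ⟨s, hs1, by omega, hs3, hs4⟩

/-- In a tree, each edge is a bridge. -/
lemma tree_not_reach {G : SimpleGraph V} (htree : G.IsTree) {x y : V}
    (hxy : G.Adj x y) :
    ¬ (G \ SimpleGraph.fromEdgeSet {s(x, y)}).Reachable x y :=
  ((SimpleGraph.isBridge_iff).1
    (SimpleGraph.isAcyclic_iff_forall_adj_isBridge.1 htree.IsAcyclic hxy))

lemma del_adj {G : SimpleGraph V} {x y u v : V} (hadj : G.Adj u v)
    (hne : s(u, v) ≠ s(x, y)) :
    (G \ SimpleGraph.fromEdgeSet {s(x, y)}).Adj u v := by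
  rw [SimpleGraph.sdiff_adj, SimpleGraph.fromEdgeSet_adj]
  exact ⟨hadj, fun h => hne (by simpa using h.1)⟩

/-- Every vertex is on one of the two sides of an edge of a connected graph. -/
lemma reach_total {G : SimpleGraph V} (hconn : G.Connected) {x y : V}
    (_hxy : G.Adj x y) (v : V) :
    (G \ SimpleGraph.fromEdgeSet {s(x, y)}).Reachable x v ∨
      (G \ SimpleGraph.fromEdgeSet {s(x, y)}).Reachable y v := by
  classical
  set G' := G \ SimpleGraph.fromEdgeSet {s(x, y)} with hG'
  obtain ⟨p⟩ := hconn.preconnected x v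
  suffices h : ∀ (u v : V) (_p : G.Walk u v),
      (G'.Reachable x u ∨ G'.Reachable y u) →
      (G'.Reachable x v ∨ G'.Reachable y v) from
    h x v p (Or.inl (SimpleGraph.Reachable.refl x))
  intro u v p
  induction p with
  | nil => exact id
  | @cons u b v hub p ih =>
    intro hu
    refine ih ?_
    by_cases he : s(u, b) = s(x, y)
    · rcases (Sym2.eq_iff).1 he with ⟨h1, h2⟩ | ⟨h1, h2⟩
      · exact Or.inr (by rw [h2])
      · exact Or.inl (by rw [h2])
    · have hadj : G'.Adj u b := del_adj hub he
      rcases hu with h | h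
      · exact Or.inl (h.trans hadj.reachable)
      · exact Or.inr (h.trans hadj.reachable)

/-- A step crossing between the two sides of a tree edge must use that edge. -/
lemma cross_edge {G : SimpleGraph V} (htree : G.IsTree) {x y u v : V}
    (hxy : G.Adj x y) (hadj : G.Adj u v)
    (hu : (G \ SimpleGraph.fromEdgeSet {s(x, y)}).Reachable x u)
    (hv : ¬ (G \ SimpleGraph.fromEdgeSet {s(x, y)}).Reachable x v) :
    u = x ∧ v = y := by
  classical
  by_cases he : s(u, v) = s(x, y)
  · rcases (Sym2.eq_iff).1 he with ⟨h1, h2⟩ | ⟨h1, h2⟩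
    · exact ⟨h1, h2⟩
    · exfalso
      rw [h1] at hu
      exact tree_not_reach htree hxy hu
  · exact absurd (hu.trans (del_adj hadj he).reachable) hv

/-- If the walker ever exits `x` toward a neighbor `y`, and the final exit from `x` is not
toward `y`, then the final rotor at `y` points back to `x`. -/
lemma exit_final {G : SimpleGraph V} (htree : G.IsTree)
    (hτ : ValidMechanism G Z τ) (hρ : ValidConfig G Z ρ)
    (hwalk : IsTransientWalk τ Z a ρ) {x y : V} (hx : x ∉ Z)
    (hadj : G.Adj x y)
    {s : ℕ} (hs : s ∈ vis τ Z a ρ x) (hsy : pos τ a ρ (s + 1) = y)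
    (hyne : y ≠ pos τ a ρ (sSup (vis τ Z a ρ x) + 1)) :
    finalConf τ Z a ρ y = x := by
  classical
  set Lx := sSup (vis τ Z a ρ x) with hLxdef
  have hbdd : BddAbove (vis τ Z a ρ x) := (vis_finite hwalk hx).bddAbove
  have hLxmem : Lx ∈ vis τ Z a ρ x := Nat.sSup_mem ⟨s, hs⟩ hbdd
  have hLxle : ∀ t ∈ vis τ Z a ρ x, t ≤ Lx := fun t ht => le_csSup hbdd ht
  have hxyne : x ≠ y := hadj.ne
  have hsLx : s < Lx := by
    rcases Nat.lt_or_ge s Lx with h | h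
    · exact h
    · exfalso
      have : s = Lx := le_antisymm (hLxle s hs) h
      rw [this] at hsy
      exact hyne hsy.symm
  have hs1Lx : s + 1 < Lx := by
    rcases Nat.lt_or_ge (s + 1) Lx with h | h
    · exact h
    · exfalso
      have : s + 1 = Lx := le_antisymm hsLx h
      rw [this, hLxmem.2] at hsy
      exact hxyne hsy
  have hyZ : y ∉ Z := by rw [← hsy]; exact hLxmem.1 (s + 1) hs1Lx
  have hs1vis : s + 1 ∈ vis τ Z a ρ y := mem_vis_of hLxmem hs1Lx hsy
  have hbddy : BddAbove (vis τ Z a ρ y) := (vis_finite hwalk hyZ).bddAbove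
  set Ly := sSup (vis τ Z a ρ y) with hLydef
  have hLymem : Ly ∈ vis τ Z a ρ y := Nat.sSup_mem ⟨_, hs1vis⟩ hbddy
  have hLyle : ∀ t ∈ vis τ Z a ρ y, t ≤ Ly := fun t ht => le_csSup hbddy ht
  have hnr : ¬ (G \ SimpleGraph.fromEdgeSet {s(x, y)}).Reachable x y :=
    tree_not_reach htree hadj
  -- the last visit to `y` precedes the last visit to `x`
  have hLyLx : Ly < Lx := by
    rcases Nat.lt_or_ge Ly Lx with h | h
    · exact h
    · exfalso
      have hne' : Ly ≠ Lx := by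
        intro h'
        apply hxyne
        have h2 := hLymem.2
        rw [h'] at h2
        rw [← hLxmem.2]
        exact h2
      have hLxLy : Lx + 1 ≤ Ly := by omega
      have hwadj : G.Adj x (pos τ a ρ (Lx + 1)) := by
        conv_lhs => rw [← hLxmem.2]
        exact pos_adj hτ hρ (by rw [hLxmem.2]; exact hx)
      have hwne : pos τ a ρ (Lx + 1) ≠ y := fun h => hyne h.symm
      have hRw : (G \ SimpleGraph.fromEdgeSet {s(x, y)}).Reachable x
          (pos τ a ρ (Lx + 1)) := by
        refine (del_adj hwadj ?_).reachable
        intro h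
        rcases Sym2.eq_iff.1 h with ⟨_, h2⟩ | ⟨h1, _⟩
        · exact hwne h2
        · exact hxyne h1
      obtain ⟨u, hu1, hu2, hu3, hu4⟩ := exists_cross
        (fun t => (G \ SimpleGraph.fromEdgeSet {s(x, y)}).Reachable x
          (pos τ a ρ t)) hLxLy hRw (fun hr => hnr (hLymem.2 ▸ hr))
      have huZ : pos τ a ρ u ∉ Z := hLymem.1 u hu2
      have hadj_u : G.Adj (pos τ a ρ u) (pos τ a ρ (u + 1)) :=
        pos_adj hτ hρ huZ
      obtain ⟨he1, _⟩ := cross_edge htree hadj hadj_u hu3 hu4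
      have : u ∈ vis τ Z a ρ x := mem_vis_of hLymem hu2 he1
      exact absurd (hLxle u this) (by omega)
  -- the final rotor at `y`
  have hfy : finalConf τ Z a ρ y = pos τ a ρ (Ly + 1) :=
    finalConf_eq_pos hwalk hyZ ⟨_, hs1vis⟩
  rw [hfy]
  by_contra hzx
  have hLy1Lx : Ly + 1 ≤ Lx := hLyLx
  have hzadj : G.Adj y (pos τ a ρ (Ly + 1)) := by
    conv_lhs => rw [← hLymem.2]
    exact pos_adj hτ hρ (by rw [hLymem.2]; exact hyZ)
  have hRz : ¬ (G \ SimpleGraph.fromEdgeSet {s(x, y)}).Reachable x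
      (pos τ a ρ (Ly + 1)) := by
    intro hr
    refine hnr (hr.trans ?_)
    refine (del_adj hzadj.symm ?_).reachable
    intro h
    rcases Sym2.eq_iff.1 h with ⟨h1, _⟩ | ⟨_, h2⟩
    · exact hzx h1
    · exact hxyne h2.symm
  obtain ⟨u, hu1, hu2, hu3, hu4⟩ := exists_cross
    (fun t => ¬ (G \ SimpleGraph.fromEdgeSet {s(x, y)}).Reachable x
      (pos τ a ρ t)) hLy1Lx hRz
    (not_not_intro (by rw [hLxmem.2]))
  rw [not_not] at hu4
  have huZ : pos τ a ρ u ∉ Z := hLxmem.1 u hu2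
  have hadj_u : G.Adj (pos τ a ρ u) (pos τ a ρ (u + 1)) := pos_adj hτ hρ huZ
  obtain ⟨_, he2⟩ := cross_edge htree hadj hadj_u.symm hu4 hu3
  have : u ∈ vis τ Z a ρ y := mem_vis_of hLxmem hu2 he2
  exact absurd (hLyle u this) (by omega)

end Aux

/-- on a locally finite tree, for a transient rotor walk with final rotor
configuration `ξ`, if the vertex `x_i = ξ^[i] a` on the maximal forward path from `a` in `ξ`
is incomplete, then the first visit to `x_{i+1}` occurred exactly one step after the last
visit to `x_i`. -/
theorem firstVisit_eq_lastVisit_add_one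
    {V : Type*} [DecidableEq V]
    (G : SimpleGraph V) [G.LocallyFinite] (htree : G.IsTree)
    (Z : Set V) (τ : V → V → V) (hτ : ValidMechanism G Z τ)
    (a : V) (ha : a ∉ Z) (ρ : V → V) (hρ : ValidConfig G Z ρ)
    (hwalk : IsTransientWalk τ Z a ρ)
    (i : ℕ) (hpath : ∀ j ≤ i, (finalConf τ Z a ρ)^[j] a ∉ Z)
    (hinc : Incomplete G (finalConf τ Z a ρ) ((finalConf τ Z a ρ)^[i] a)) :
    firstVisit τ Z a ρ ((finalConf τ Z a ρ)^[i + 1] a) =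
      lastVisit τ Z a ρ ((finalConf τ Z a ρ)^[i] a) + 1 := by
  classical
  set ξ := finalConf τ Z a ρ with hξdef
  have hξvalid : ValidConfig G Z ξ := finalConf_valid hτ hρ
  -- every vertex on the forward path is visited
  have hchain : ∀ j, j ≤ i → (vis τ Z a ρ (ξ^[j] a)).Nonempty := by
    intro j
    induction j with
    | zero => exact fun _ => ⟨0, fun s hs => absurd hs (Nat.not_lt_zero s), rfl⟩
    | succ j ih =>
      intro hj
      have hj' : j ≤ i := by omega
      have hne := ih hj'
      have hjZ : ξ^[j] a ∉ Z := hpath j hj'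
      have heq := finalConf_eq_pos hwalk hjZ hne
      rw [← hξdef] at heq
      set Lj := sSup (vis τ Z a ρ (ξ^[j] a)) with hLjdef
      have hLjmem : Lj ∈ vis τ Z a ρ (ξ^[j] a) :=
        Nat.sSup_mem hne (vis_finite hwalk hjZ).bddAbove
      refine ⟨Lj + 1, fun s hs => ?_, ?_⟩
      · rcases Nat.lt_succ_iff_lt_or_eq.1 hs with h | h
        · exact hLjmem.1 s h
        · rw [h, hLjmem.2]; exact hjZ
      · rw [Function.iterate_succ_apply', heq]
  set x := ξ^[i] a with hxdef
  have hxZ : x ∉ Z := hpath i le_rfl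
  have hxne : (vis τ Z a ρ x).Nonempty := hchain i le_rfl
  have hbdd : BddAbove (vis τ Z a ρ x) := (vis_finite hwalk hxZ).bddAbove
  set Lx := sSup (vis τ Z a ρ x) with hLxdef
  have hLxmem : Lx ∈ vis τ Z a ρ x := Nat.sSup_mem hxne hbdd
  have hLxle : ∀ t ∈ vis τ Z a ρ x, t ≤ Lx := fun t ht => le_csSup hbdd ht
  have hfx : ξ x = pos τ a ρ (Lx + 1) := finalConf_eq_pos hwalk hxZ hxne
  have hww : ξ^[i + 1] a = ξ x := by
    rw [Function.iterate_succ_apply', ← hxdef]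
  have hwpos : pos τ a ρ (Lx + 1) = ξ^[i + 1] a := by rw [hww, hfx]
  have hwvis : Lx + 1 ∈ vis τ Z a ρ (ξ^[i + 1] a) := by
    refine ⟨fun s hs => ?_, hwpos⟩
    rcases Nat.lt_succ_iff_lt_or_eq.1 hs with h | h
    · exact hLxmem.1 s h
    · rw [h, hLxmem.2]; exact hxZ
  have hadjxw : G.Adj x (ξ x) := hξvalid x hxZ
  have hnr : ¬ (G \ SimpleGraph.fromEdgeSet {s(x, ξ x)}).Reachable x (ξ x) :=
    tree_not_reach htree hadjxw
  rw [firstVisit_def, lastVisit_def, ← hLxdef]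
  have hle : sInf (vis τ Z a ρ (ξ^[i + 1] a)) ≤ Lx + 1 := Nat.sInf_le hwvis
  rcases Nat.eq_or_lt_of_le hle with h | ht0lt
  · exact h
  exfalso
  -- suppose the first visit to `w = ξ x` is earlier
  set t₀ := sInf (vis τ Z a ρ (ξ^[i + 1] a)) with ht₀def
  have ht0mem : t₀ ∈ vis τ Z a ρ (ξ^[i + 1] a) := Nat.sInf_mem ⟨_, hwvis⟩
  have ht0Lx : t₀ ≤ Lx := by omega
  by_cases hcase : (G \ SimpleGraph.fromEdgeSet {s(x, ξ x)}).Reachable x a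
  · -- `a` is on the `x`-side: the walker crossed `x → w` before time `t₀`
    obtain ⟨u, _, hu2, hu3, hu4⟩ := exists_cross
      (fun t => (G \ SimpleGraph.fromEdgeSet {s(x, ξ x)}).Reachable x
        (pos τ a ρ t)) (Nat.zero_le t₀) (by exact hcase)
      (by
        intro hr
        have hr' : (G \ SimpleGraph.fromEdgeSet {s(x, ξ x)}).Reachable x
            (pos τ a ρ t₀) := hr
        rw [ht0mem.2, hww] at hr'
        exact hnr hr')
    have huZ : pos τ a ρ u ∉ Z := ht0mem.1 u hu2
    have hadj_u : G.Adj (pos τ a ρ u) (pos τ a ρ (u + 1)) := pos_adj hτ hρ huZ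
    obtain ⟨he1, he2⟩ := cross_edge htree hadjxw hadj_u hu3 hu4
    have hu_vis : u ∈ vis τ Z a ρ x := mem_vis_of ht0mem hu2 he1
    have huLx : u < Lx := lt_of_lt_of_le hu2 ht0Lx
    -- rotor exponents of the two exits toward `w`
    have ha1 : (τ x)^[nvis τ a ρ x u + 1] (ρ x) = ξ x := by
      rw [← exit_eq he1]; exact he2
    have ha2 : (τ x)^[nvis τ a ρ x Lx + 1] (ρ x) = ξ x := by
      rw [← exit_eq hLxmem.2, ← hfx]
    set a1 := nvis τ a ρ x u + 1 with ha1def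
    set a2 := nvis τ a ρ x Lx + 1 with ha2def
    have ha1a2 : a1 < a2 := by
      have := nvis_exit_lt he1 huLx
      omega
    set p := a2 - a1 with hpdef
    have hp0 : 0 < p := by omega
    have hfix : (τ x)^[p] (ξ x) = ξ x := by
      conv_lhs => rw [← ha1]
      rw [← Function.iterate_add_apply]
      have hpa : p + a1 = a2 := by omega
      rw [hpa, ha2]
    obtain ⟨y, hyadj, hynot⟩ := hinc
    have hyw : y ≠ ξ x := by
      intro h
      exact hynot (h ▸ Relation.ReflTransGen.single (Or.inl rfl))
    obtain ⟨n, hn⟩ := (hτ x hxZ).2 (ξ x) hadjxw y hyadj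
    set r := n % p with hrdef
    have hr : r < p := Nat.mod_lt _ hp0
    have hfixmul : (τ x)^[p * (n / p)] (ξ x) = ξ x := by
      rw [Function.iterate_mul]
      exact Function.iterate_fixed hfix _
    have hyr : (τ x)^[r] (ξ x) = y := by
      have hnpr : r + p * (n / p) = n := by
        rw [hrdef, Nat.add_comm]
        exact Nat.div_add_mod n p
      rw [← hn, ← hnpr, Function.iterate_add_apply, hfixmul]
    set e := r + a1 with hedef
    have hey : (τ x)^[e] (ρ x) = y := by
      rw [hedef, Function.iterate_add_apply, ha1, hyr]
    have he1' : 1 ≤ e := by omega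
    have he2' : e < a2 := by omega
    have hnvL : nvis τ a ρ x (Lx + 1) = nvis τ a ρ x Lx + 1 := by
      rw [nvis_succ, if_pos hLxmem.2]
    have hj : e - 1 < nvis τ a ρ x (Lx + 1) := by omega
    obtain ⟨s, hs_lt, hs_pos, hs_n⟩ := exists_exit hj
    have hsLx : s < Lx := by
      rcases Nat.lt_succ_iff_lt_or_eq.1 hs_lt with h | h
      · exact h
      · exfalso; rw [h] at hs_n; omega
    have hs_vis : s ∈ vis τ Z a ρ x := mem_vis_of hLxmem hsLx hs_pos
    have hexit_y : pos τ a ρ (s + 1) = y := by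
      rw [exit_eq hs_pos, hs_n]
      have : e - 1 + 1 = e := by omega
      rw [this, hey]
    have hyne' : y ≠ pos τ a ρ (sSup (vis τ Z a ρ x) + 1) := by
      rw [← hLxdef, ← hfx]; exact hyw
    have := exit_final htree hτ hρ hwalk hxZ hyadj hs_vis hexit_y hyne'
    exact hynot (Relation.ReflTransGen.single (Or.inr this))
  · -- `a` is on the `w`-side: the forward path itself crosses `w → x`,
    -- forcing a visit to `x` after its last visit
    obtain ⟨j, _, hj2, hj3, hj4⟩ := exists_cross
      (fun j => ¬ (G \ SimpleGraph.fromEdgeSet {s(x, ξ x)}).Reachable x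
        (ξ^[j] a)) (Nat.zero_le i) (by exact hcase)
      (not_not_intro (by rw [← hxdef]))
    rw [not_not] at hj4
    have hjZ : ξ^[j] a ∉ Z := hpath j (by omega)
    have hadj_j : G.Adj (ξ^[j] a) (ξ^[j + 1] a) := by
      rw [Function.iterate_succ_apply']
      exact hξvalid _ hjZ
    obtain ⟨he1, he2⟩ := cross_edge htree hadjxw hadj_j.symm hj4 hj3
    have hξw : ξ (ξ x) = x := by
      rw [← he2, ← Function.iterate_succ_apply' ξ j a, he1]
    have hwZ : ξ x ∉ Z := by rw [← he2]; exact hjZ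
    have hwvis' : Lx + 1 ∈ vis τ Z a ρ (ξ x) := by rw [← hww]; exact hwvis
    have hbddw : BddAbove (vis τ Z a ρ (ξ x)) := (vis_finite hwalk hwZ).bddAbove
    set Lw := sSup (vis τ Z a ρ (ξ x)) with hLwdef
    have hLwmem : Lw ∈ vis τ Z a ρ (ξ x) := Nat.sSup_mem ⟨_, hwvis'⟩ hbddw
    have hLwge : Lx + 1 ≤ Lw := le_csSup hbddw hwvis'
    have hfw : ξ (ξ x) = pos τ a ρ (Lw + 1) :=
      finalConf_eq_pos hwalk hwZ ⟨_, hwvis'⟩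
    have hLw1vis : Lw + 1 ∈ vis τ Z a ρ x := by
      refine ⟨fun s hs => ?_, by rw [← hfw, hξw]⟩
      rcases Nat.lt_succ_iff_lt_or_eq.1 hs with h | h
      · exact hLwmem.1 s h
      · rw [h, hLwmem.2]; exact hwZ
    have := hLxle _ hLw1vis
    omega
end RotorWalk
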